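/- In the circle theorem's setup (C_n^0 with n ≥ 10, commuting retractions φ_i all assumed K-Lipschitz with K = (√(8n+1) − 1)/8, μ_1 = φ_1-image of all of C_n): define A (resp. B) as the set of points y ∈ C_n \ {μ_1} with d(y, μ_1) ≤ 3K lying to the left (resp. right) of μ_1, and for w ∈ C_n \ {μ_1} let f(w) ∈ {A, B} record which of A, B contains the last point of the chain S_w from μ_1 to w that lies in A ∪ B. Then f is well-defined: every chain S_w from μ_1 to w intersects A ∪ B, because the second element z of S_w satisfies d(μ_1, z) ≤ 2K. -/

import Mathlib

/-- Chain relation for indices in `Fin (n+1)`: `a < b` and `φ (b-1) (μ b) = μ a`. -/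
def chainRelF {M : Type*} {n : ℕ} (φ : Fin (n + 1) → M → M) (μ : Fin (n + 1) → M)
    (a b : Fin (n + 1)) : Prop :=
  a < b ∧ φ (b - 1) (μ b) = μ a

/-- in the circle theorem's setup (`C_n^0`, `n ≥ 10`, commuting retractions
all `K`-Lipschitz with `K = (√(8n+1) - 1)/8`, and `φ 1 ≡ μ 1` on `C_n`), the map `f`
into `{A, B}` is well defined: every chain starting at `μ 1` meets
`A ∪ B = {y ≠ μ 1 : d(y, μ 1) ≤ 3K}`, since already its second element `z` satisfies
`d(μ 1, z) ≤ 2K` (and `z ≠ μ 1`), hence `d(μ 1, z) ≤ 3K`. -/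
theorem chain_second_element_close {M : Type*} [MetricSpace M]
    (n : ℕ) (hn : 10 ≤ n) (x : Fin (n + 1) → M) (hxinj : Function.Injective x)
    (hd0 : ∀ k : Fin (n + 1), k ≠ 0 → dist (x k) (x 0) = (n : ℝ))
    (hd : ∀ k l : Fin (n + 1), k ≠ 0 → l ≠ 0 →
      dist (x k) (x l) = min ((((k : ℕ) : ℤ) - ((l : ℕ) : ℤ)).natAbs : ℝ)
        ((n : ℝ) - ((((k : ℕ) : ℤ) - ((l : ℕ) : ℤ)).natAbs : ℝ)))
    (μ : Fin (n + 1) → M) (hμ0 : μ 0 = x 0) (hμinj : Function.Injective μ)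
    (hμrange : Set.range μ = Set.range x)
    (φ : Fin (n + 1) → M → M)
    (hmaps : ∀ i : Fin (n + 1), ∀ p ∈ Set.range x, ∃ j ≤ i, φ i p = μ j)
    (hretr : ∀ i : Fin (n + 1), ∀ j ≤ i, φ i (μ j) = μ j)
    (hcomm : ∀ i j : Fin (n + 1), i ≤ j → ∀ p ∈ Set.range x,
      φ j (φ i p) = φ i p ∧ φ i (φ j p) = φ i p)
    (hlip : ∀ i : Fin (n + 1), ∀ a ∈ Set.range x, ∀ b ∈ Set.range x,
      dist (φ i a) (φ i b) ≤ (Real.sqrt (8 * n + 1) - 1) / 8 * dist a b)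
    (hφ1 : ∀ p ∈ Set.range x, p ≠ x 0 → φ 1 p = μ 1) :
    ∀ S : List (Fin (n + 1)), S.Chain' (chainRelF φ μ) → S.head? = some 1 →
      ∀ j : Fin (n + 1), S[1]? = some j →
        dist (μ j) (μ 1) ≤ 2 * ((Real.sqrt (8 * n + 1) - 1) / 8) ∧
        μ j ≠ μ 1 ∧
        dist (μ j) (μ 1) ≤ 3 * ((Real.sqrt (8 * n + 1) - 1) / 8) := by
  classical
  intro S hS hhead j hj
  -- K ≥ 1
  have hK : (1:ℝ) ≤ (Real.sqrt (8 * n + 1) - 1) / 8 := by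
    have h0 : (0:ℝ) ≤ 8 * n + 1 := by positivity
    have hs := Real.sq_sqrt h0
    have hsn := Real.sqrt_nonneg (8 * (n:ℝ) + 1)
    have hn' : (10:ℝ) ≤ n := by exact_mod_cast hn
    nlinarith [hs, hsn]
  set K : ℝ := (Real.sqrt (8 * n + 1) - 1) / 8 with hKdef
  -- extract the chain relation
  have hrel : chainRelF φ μ 1 j := by
    match S, hS, hhead, hj with
    | a :: b :: T, hS, hhead, hj =>
      have ha : a = 1 := by simpa using hhead
      have hb : b = j := by simpa using hj
      subst ha; subst hb
      exact (List.isChain_cons_cons.mp hS).1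
  obtain ⟨h1j, hφij⟩ := hrel
  have hv1 : (1 : Fin (n+1)).val = 1 := by
    rw [Fin.val_one']
    exact Nat.mod_eq_of_lt (by omega)
  have hj2 : 2 ≤ j.val := by
    have h := h1j
    rw [Fin.lt_def, hv1] at h
    omega
  have hj0 : j ≠ 0 := by
    intro h; rw [h] at hj2; simp at hj2
  have hj1 : j ≠ 1 := by
    intro h; rw [h, hv1] at hj2; omega
  have hμj1 : μ j ≠ μ 1 := fun h => hj1 (hμinj h)
  have hival : (j - 1).val = j.val - 1 := by
    rw [Fin.coe_sub_one, if_neg hj0]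
  have hij : j - 1 ≤ j := by
    rw [Fin.le_def, hival]; omega
  -- μ j = x m, μ 1 = x m'
  obtain ⟨m, hm⟩ : μ j ∈ Set.range x := hμrange ▸ Set.mem_range_self j
  obtain ⟨m', hm'⟩ : μ 1 ∈ Set.range x := hμrange ▸ Set.mem_range_self 1
  have hm0 : m ≠ 0 := by
    intro h
    have h01 : μ 0 = μ j := by rw [hμ0, ← h, hm]
    have := hμinj h01
    rw [Fin.ext_iff] at this
    simp at this
    omega
  have hm'0 : m' ≠ 0 := by
    intro h
    have h01 : μ 0 = μ 1 := by rw [hμ0, ← h, hm']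
    have := hμinj h01
    rw [Fin.ext_iff, hv1] at this
    simp at this
  have hmval : 1 ≤ m.val := by
    have : m.val ≠ 0 := fun h => hm0 (Fin.ext (by simp [h]))
    omega
  have hmn : m.val ≤ n := by omega
  have hm'val : 1 ≤ m'.val := by
    have : m'.val ≠ 0 := fun h => hm'0 (Fin.ext (by simp [h]))
    omega
  have hm'n : m'.val ≤ n := by omega
  -- the circular walk starting at m
  set F : ℕ → ℕ := fun t => if m.val + t ≤ n then m.val + t else m.val + t - n with hF
  set G : ℕ → Fin (n+1) := fun t => ⟨F t % (n+1), Nat.mod_lt _ (Nat.succ_pos n)⟩ with hG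
  have hFrange : ∀ t, t ≤ n → 1 ≤ F t ∧ F t ≤ n := by
    intro t ht
    simp only [hF]
    split <;> omega
  have hGval : ∀ t, t ≤ n → (G t).val = F t := by
    intro t ht
    simp only [hG]
    exact Nat.mod_eq_of_lt (by have := hFrange t ht; omega)
  set t₁ : ℕ := if m.val ≤ m'.val then m'.val - m.val else m'.val + n - m.val with ht₁def
  have ht₁ : t₁ ≤ n := by
    simp only [ht₁def]; split <;> omega
  have hFt₁ : F t₁ = m'.val := by
    simp only [hF, ht₁def]
    split_ifs <;> omega
  have hGt₁ : x (G t₁) = μ 1 := by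
    have : G t₁ = m' := Fin.ext (by rw [hGval t₁ ht₁, hFt₁])
    rw [this, hm']
  have hG0 : x (G 0) = μ j := by
    have hF0 : F 0 = m.val := by simp only [hF]; split <;> omega
    have : G 0 = m := Fin.ext (by rw [hGval 0 (by omega), hF0])
    rw [this, hm]
  -- first time the value under φ j changes
  have hEx : ∃ t, t ≤ t₁ ∧ φ j (x (G t)) ≠ μ j := by
    refine ⟨t₁, le_rfl, ?_⟩
    rw [hGt₁, hretr j 1 h1j.le]
    exact fun h => hμj1 h.symm
  set t' : ℕ := Nat.find hEx with ht'def
  have hspec : t' ≤ t₁ ∧ φ j (x (G t')) ≠ μ j := Nat.find_spec hEx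
  have ht'1 : 1 ≤ t' := by
    rcases Nat.eq_zero_or_pos t' with h | h
    · exfalso
      apply hspec.2
      rw [h, hG0, hretr j j le_rfl]
    · exact h
  have ht'n : t' ≤ n := le_trans hspec.1 ht₁
  have hprev : φ j (x (G (t' - 1))) = μ j := by
    by_contra h
    exact Nat.find_min hEx (show t' - 1 < t' by omega) ⟨by omega, h⟩
  obtain ⟨m₂, hm₂j, hφp⟩ := hmaps j (x (G t')) ⟨_, rfl⟩
  have hm₂ne : m₂ ≠ j := fun h => hspec.2 (h ▸ hφp)
  have hm₂i : m₂ ≤ j - 1 := by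
    rw [Fin.le_def, hival]
    have h1 := hm₂j
    rw [Fin.le_def] at h1
    have h2 : m₂.val ≠ j.val := fun h => hm₂ne (Fin.ext h)
    omega
  -- commuting relations
  have hφiprev : φ (j - 1) (x (G (t' - 1))) = μ 1 := by
    have h2 := (hcomm (j - 1) j hij (x (G (t' - 1))) ⟨_, rfl⟩).2
    rw [hprev, hφij] at h2
    exact h2.symm
  have hφip : φ (j - 1) (x (G t')) = μ m₂ := by
    have h2 := (hcomm (j - 1) j hij (x (G t')) ⟨_, rfl⟩).2
    rw [hφp, hretr (j - 1) m₂ hm₂i] at h2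
    exact h2.symm
  -- the two walk points are adjacent on the circle
  have hGne : G t' ≠ 0 := by
    intro h
    have hv := hGval t' ht'n
    rw [h] at hv
    simp at hv
    have := hFrange t' ht'n
    omega
  have hGne' : G (t' - 1) ≠ 0 := by
    intro h
    have hv := hGval (t' - 1) (by omega)
    rw [h] at hv
    simp at hv
    have := hFrange (t' - 1) (by omega)
    omega
  have hadj : dist (x (G t')) (x (G (t' - 1))) = 1 := by
    rw [hd _ _ hGne hGne']
    have hv1' : (G t').val = F t' := hGval t' ht'n
    have hv2' : (G (t' - 1)).val = F (t' - 1) := hGval (t' - 1) (by omega)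
    have key : ((((G t').val : ℤ) - ((G (t' - 1)).val : ℤ)).natAbs = 1) ∨
        ((((G t').val : ℤ) - ((G (t' - 1)).val : ℤ)).natAbs = n - 1) := by
      rw [hv1', hv2']
      simp only [hF]
      split_ifs with h1 h2 h3 <;> [ (left; omega); (left; omega); (right; omega); (left; omega) ]
    have hn2 : (2:ℝ) ≤ (n:ℝ) := by
      have : (10:ℝ) ≤ (n:ℝ) := by exact_mod_cast hn
      linarith
    rcases key with hk | hk
    · rw [hk]
      push_cast
      rw [min_eq_left (by linarith)]
    · rw [hk]
      rw [Nat.cast_sub (by omega : 1 ≤ n)]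
      have he : (n:ℝ) - ((n:ℝ) - 1) = 1 := by ring
      push_cast
      rw [he, min_eq_right (by linarith)]
  -- Lipschitz estimates
  have d2 : dist (μ j) (μ m₂) ≤ K := by
    calc dist (μ j) (μ m₂)
        = dist (φ j (x (G (t' - 1)))) (φ j (x (G t'))) := by rw [hprev, hφp]
      _ ≤ K * dist (x (G (t' - 1))) (x (G t')) := hlip j _ ⟨_, rfl⟩ _ ⟨_, rfl⟩
      _ = K := by rw [dist_comm, hadj, mul_one]
  have d1 : dist (μ m₂) (μ 1) ≤ K := by
    calc dist (μ m₂) (μ 1)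
        = dist (φ (j - 1) (x (G t'))) (φ (j - 1) (x (G (t' - 1)))) := by
          rw [hφip, hφiprev]
      _ ≤ K * dist (x (G t')) (x (G (t' - 1))) := hlip (j - 1) _ ⟨_, rfl⟩ _ ⟨_, rfl⟩
      _ = K := by rw [hadj, mul_one]
  have htri : dist (μ j) (μ 1) ≤ 2 * K := by
    have := dist_triangle (μ j) (μ m₂) (μ 1)
    linarith
  exact ⟨htri, hμj1, by linarith⟩
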